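/- Let (E_1,E_2,E_3,...) = (1, 1,2, 1,2,3, 1,2,3,4, ...) (the m-th group consists of 1,2,...,m) and (q_1,q_2,q_3,...) = (2, 3,3, 4,4,4, 5,5,5,5, ...) (the m-th group consists of m copies of m+1), and let x = Σ_{n=1}^∞ E_n/(q_1···q_n). Then x is Q-distribution normal but x is not Q-normal (indeed x is not Q-normal of order 1, since the digit 0 never occurs). -/

import Mathlib

/-- `Q_n^{(k)} = Σ_{j=1}^n 1/(q_j q_{j+1} ⋯ q_{j+k-1})` for a basic sequence `q` (1-indexed). -/
noncomputable def QNkG (q : ℕ → ℕ) (k n : ℕ) : ℝ :=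
  ∑ j ∈ Finset.Icc 1 n, (∏ t ∈ Finset.range k, (q (j + t) : ℝ))⁻¹

/-- `N_n^Q(B, x)`: the number of occurrences of the block `B` starting at a position
no greater than `n` in the `Q`-Cantor series expansion `(E_1, E_2, …)` of `x`. -/
def NQG (E : ℕ → ℕ) (B : List ℕ) (n : ℕ) : ℕ :=
  ((Finset.Icc 1 n).filter fun j => (List.range B.length).map (fun t => E (j + t)) = B).card

/-- A real number whose `Q`-Cantor series digit sequence is `E` is `Q`-normal of order `k`
if for every block `B` of length `k`, `N_n^Q(B,x)/Q_n^{(k)} → 1`. -/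
def QNormalOfOrder (q E : ℕ → ℕ) (k : ℕ) : Prop :=
  ∀ B : List ℕ, B.length = k →
    Filter.Tendsto (fun n => (NQG E B n : ℝ) / QNkG q k n) Filter.atTop (nhds 1)

/-- `Q`-normality: `Q`-normality of order `k` for every `k ≥ 1`. -/
def QNormal (q E : ℕ → ℕ) : Prop := ∀ k : ℕ, 1 ≤ k → QNormalOfOrder q E k

/-- The value `Σ_{n=1}^∞ E_n/(q_1 ⋯ q_n)` of a `Q`-Cantor series with digits `E` (1-indexed). -/
noncomputable def cantorVal (q E : ℕ → ℕ) : ℝ :=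
  ∑' n : ℕ, (E (n + 1) : ℝ) / ∏ m ∈ Finset.range (n + 1), (q (m + 1) : ℝ)

/-- `T_{Q,n}(x) = q_1 ⋯ q_n · x (mod 1)`. -/
noncomputable def TQ (q : ℕ → ℕ) (x : ℝ) (n : ℕ) : ℝ :=
  Int.fract ((∏ m ∈ Finset.range n, (q (m + 1) : ℝ)) * x)

/-- A sequence `u` of real numbers is uniformly distributed mod 1. -/
def UDMod1 (u : ℕ → ℝ) : Prop :=
  ∀ a b : ℝ, 0 ≤ a → a < b → b ≤ 1 →
    Filter.Tendsto
      (fun N => (((Finset.range N).filter fun n =>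
        a ≤ Int.fract (u n) ∧ Int.fract (u n) < b).card : ℝ) / N)
      Filter.atTop (nhds (b - a))

/-- For `n ≥ 1`, the index `m` of the group containing position `n`, i.e. the least `m`
with `n ≤ m(m+1)/2`. -/
noncomputable def mOf (n : ℕ) : ℕ := sInf {m | n ≤ m * (m + 1) / 2}

/-- The digit sequence `(E_1, E_2, …) = (1, 1,2, 1,2,3, 1,2,3,4, …)`:
the `m`-th group consists of `1, 2, …, m`. -/
noncomputable def Edig (n : ℕ) : ℕ := n - (mOf n - 1) * mOf n / 2

/-- The basic sequence `(q_1, q_2, …) = (2, 3,3, 4,4,4, 5,5,5,5, …)`: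
the `m`-th group consists of `m` copies of `m+1`. -/
noncomputable def qSeq (n : ℕ) : ℕ := mOf n + 1

def Tn (m : ℕ) : ℕ := m * (m + 1) / 2

lemma Tn_succ (K : ℕ) : Tn (K+1) = Tn K + (K+1) := by
  have h : (K+1)*(K+1+1) = K*(K+1) + 2*(K+1) := by ring
  simp only [Tn]; omega

lemma Tn_mono : Monotone Tn := fun a b h => Nat.div_le_div_right (Nat.mul_le_mul h (by omega))

lemma self_le_Tn (n : ℕ) : n ≤ Tn n := by
  rcases n with _ | m
  · simp [Tn]
  · simp only [Tn]
    rw [Nat.le_div_iff_mul_le (by norm_num)]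
    nlinarith

lemma mOf_eq {K n : ℕ} (h1 : Tn K < n) (h2 : n ≤ Tn (K+1)) : mOf n = K + 1 := by
  apply le_antisymm
  · exact Nat.sInf_le h2
  · refine le_csInf ⟨K+1, h2⟩ (fun b hb => ?_)
    by_contra hc
    push_neg at hc
    have hle : Tn b ≤ Tn K := Tn_mono (by omega)
    have : n ≤ Tn b := hb
    omega

lemma mOf_pos {n : ℕ} (h : 1 ≤ n) : 1 ≤ mOf n := by
  rcases Nat.eq_zero_or_pos (mOf n) with h0 | h1
  · exfalso
    have hmem : mOf n ∈ {m | n ≤ m * (m + 1) / 2} := Nat.sInf_mem ⟨n, self_le_Tn n⟩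
    rw [h0] at hmem
    simp only [Set.mem_setOf_eq] at hmem
    omega
  · exact h1

lemma mOf_spec {n : ℕ} (h : 1 ≤ n) : Tn (mOf n - 1) < n ∧ n ≤ Tn (mOf n) := by
  have h1 := mOf_pos h
  have hmem : n ≤ Tn (mOf n) := Nat.sInf_mem (⟨n, self_le_Tn n⟩ : Set.Nonempty {m | n ≤ m * (m + 1) / 2})
  refine ⟨?_, hmem⟩
  by_contra hc
  push_neg at hc
  have : mOf n ≤ mOf n - 1 := Nat.sInf_le hc
  omega

lemma digit_eq {K k : ℕ} (hk : k < K + 1) :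
    Edig (Tn K + k + 1) = k + 1 ∧ qSeq (Tn K + k + 1) = K + 2 := by
  have hm : mOf (Tn K + k + 1) = K + 1 := mOf_eq (by omega) (by rw [Tn_succ]; omega)
  constructor
  · simp only [Edig, hm]
    have : (K + 1 - 1) * (K + 1) / 2 = Tn K := by simp [Tn]
    rw [this]; omega
  · simp [qSeq, hm]

lemma Edig_bounds {j : ℕ} (h : 1 ≤ j) : 1 ≤ Edig j ∧ Edig j ≤ mOf j := by
  obtain ⟨h1, h2⟩ := mOf_spec h
  have hp := mOf_pos h
  obtain ⟨M, hM⟩ : ∃ M, mOf j = M + 1 := ⟨mOf j - 1, by omega⟩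
  simp only [Edig, hM]
  have he : (M + 1 - 1) * (M + 1) / 2 = Tn M := by simp [Tn]
  rw [he]
  rw [hM] at h1 h2
  simp only [Nat.add_sub_cancel] at h1
  rw [Tn_succ] at h2
  omega

lemma qSeq_ge {j : ℕ} (h : 1 ≤ j) : 2 ≤ qSeq j := by
  have := mOf_pos h; simp [qSeq]; omega

noncomputable def Rr (n k : ℕ) : ℝ := ∏ t ∈ Finset.range k, (qSeq (t + n + 1) : ℝ)

noncomputable def tl (n : ℕ) : ℝ := ∑' k, (Edig (n + k + 1) : ℝ) / Rr n (k + 1)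

lemma Rr_zero (n : ℕ) : Rr n 0 = 1 := by simp [Rr]

lemma Rr_succ (n k : ℕ) : Rr n (k+1) = Rr n k * (qSeq (k + n + 1) : ℝ) := by
  simp [Rr, Finset.prod_range_succ]

lemma Rr_succ' (n k : ℕ) : Rr n (k+1) = (qSeq (n + 1) : ℝ) * Rr (n+1) k := by
  simp only [Rr]
  rw [Finset.prod_range_succ', mul_comm]
  congr 1
  · norm_num
  · exact Finset.prod_congr rfl (fun t _ => by
      have h : t + 1 + n + 1 = t + (n + 1) + 1 := by omega
      rw [h])

lemma Rr_ge (n k : ℕ) : (2:ℝ)^k ≤ Rr n k := by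
  induction k with
  | zero => simp [Rr_zero]
  | succ k ih =>
    rw [Rr_succ, pow_succ]
    have h2 : (2:ℝ) ≤ (qSeq (k + n + 1) : ℝ) := by
      exact_mod_cast qSeq_ge (by omega)
    have : (0:ℝ) < 2^k := by positivity
    nlinarith

lemma Rr_pos (n k : ℕ) : 0 < Rr n k := lt_of_lt_of_le (by positivity) (Rr_ge n k)

lemma qSeq_cast_ge (j : ℕ) (h : 1 ≤ j) : (2:ℝ) ≤ (qSeq j : ℝ) := by
  exact_mod_cast qSeq_ge h

lemma Rr_succ'' (n k : ℕ) : Rr n (k+1) = Rr n k * (qSeq (n + k + 1) : ℝ) := by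
  have h : k + n + 1 = n + k + 1 := by omega
  rw [Rr_succ, h]

lemma term_le (n k : ℕ) :
    (Edig (n + k + 1) : ℝ) / Rr n (k + 1) ≤ 1 / Rr n k - 1 / Rr n (k+1) := by
  have hq : (Edig (n + k + 1) : ℝ) ≤ (qSeq (n + k + 1) : ℝ) - 1 := by
    have h1 := (Edig_bounds (j := n + k + 1) (by omega)).2
    have h2 : Edig (n+k+1) + 1 ≤ qSeq (n+k+1) := by simp only [qSeq]; omega
    have h3 : ((Edig (n+k+1) : ℝ)) + 1 ≤ (qSeq (n+k+1) : ℝ) := by exact_mod_cast h2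
    linarith
  have hR := Rr_pos n k
  have hR1 := Rr_pos n (k+1)
  have hq2 : (0:ℝ) < (qSeq (n+k+1) : ℝ) := lt_of_lt_of_le (by norm_num) (qSeq_cast_ge _ (by omega))
  have hrs := Rr_succ'' n k
  have key : 1 / Rr n k - 1 / Rr n (k+1) = ((qSeq (n+k+1) : ℝ) - 1) / Rr n (k+1) := by
    rw [hrs]; field_simp
  rw [key]
  gcongr

lemma term_nonneg (n k : ℕ) : 0 ≤ (Edig (n + k + 1) : ℝ) / Rr n (k + 1) :=
  div_nonneg (by positivity) (le_of_lt (Rr_pos n (k+1)))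

lemma summable_tel (n : ℕ) : Summable (fun k => 1 / Rr n k - 1 / Rr n (k+1)) := by
  apply Summable.of_nonneg_of_le
  · intro k
    have h1 := Rr_pos n k
    have h2 := Rr_pos n (k+1)
    have : Rr n k ≤ Rr n (k+1) := by
      rw [Rr_succ]
      nlinarith [show (2:ℝ) ≤ (qSeq (k+n+1):ℝ) from by exact_mod_cast qSeq_ge (by omega)]
    have := one_div_le_one_div_of_le h1 this
    linarith
  · intro k
    have h1 := Rr_pos n k
    have h2 := Rr_pos n (k+1)
    have h3 := Rr_ge n k
    have h4 : 0 ≤ 1 / Rr n (k+1) := by positivity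
    calc 1 / Rr n k - 1 / Rr n (k+1) ≤ 1 / Rr n k := by linarith
    _ ≤ 1 / 2^k := by
      apply one_div_le_one_div_of_le (by positivity) h3
    _ = (1/2)^k := by rw [one_div_pow]
  · exact summable_geometric_of_lt_one (by norm_num) (by norm_num)

lemma summable_tl (n : ℕ) : Summable (fun k => (Edig (n + k + 1) : ℝ) / Rr n (k + 1)) := by
  exact Summable.of_nonneg_of_le (term_nonneg n) (term_le n) (summable_tel n)

lemma tl_nonneg (n : ℕ) : 0 ≤ tl n := tsum_nonneg (term_nonneg n)

lemma tsum_tel (n : ℕ) : ∑' k, (1 / Rr n k - 1 / Rr n (k+1)) = 1 := by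
  have hgeo : Filter.Tendsto (fun k : ℕ => ((1:ℝ)/2)^k) Filter.atTop (nhds 0) :=
    tendsto_pow_atTop_nhds_zero_of_lt_one (by norm_num) (by norm_num)
  have hlim : Filter.Tendsto (fun k => 1 / Rr n k) Filter.atTop (nhds 0) := by
    apply squeeze_zero (fun k => le_of_lt (one_div_pos.mpr (Rr_pos n k))) (fun k => ?_) hgeo
    calc 1 / Rr n k ≤ 1 / 2^k := one_div_le_one_div_of_le (by positivity) (Rr_ge n k)
      _ = (1/2)^k := by rw [one_div_pow]
  have hs := summable_tel n
  have hps := hs.hasSum.tendsto_sum_nat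
  have heq : ∀ K, ∑ k ∈ Finset.range K, (1 / Rr n k - 1 / Rr n (k+1)) = 1 / Rr n 0 - 1 / Rr n K :=
    fun K => Finset.sum_range_sub' (fun k => 1 / Rr n k) K
  rw [Filter.tendsto_congr heq] at hps
  have : Filter.Tendsto (fun K => 1 / Rr n 0 - 1 / Rr n K) Filter.atTop (nhds (1 / Rr n 0 - 0)) :=
    Filter.Tendsto.sub tendsto_const_nhds hlim
  have := tendsto_nhds_unique hps this
  rw [this, Rr_zero]
  norm_num

lemma tl_le_one (n : ℕ) : tl n ≤ 1 := by
  rw [← tsum_tel n]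
  exact Summable.tsum_le_tsum (term_le n) (summable_tl n) (summable_tel n)

lemma tl_rec (n : ℕ) : tl n = ((Edig (n + 1) : ℝ) + tl (n + 1)) / (qSeq (n + 1) : ℝ) := by
  have hq : (0:ℝ) < (qSeq (n+1) : ℝ) := lt_of_lt_of_le (by norm_num) (qSeq_cast_ge _ (by omega))
  have hshift : ∀ k, (Edig (n + (k+1) + 1) : ℝ) / Rr n (k + 1 + 1)
      = ((Edig ((n+1) + k + 1) : ℝ) / Rr (n+1) (k + 1)) / (qSeq (n+1) : ℝ) := by
    intro k
    have h1 : Rr n (k + 1 + 1) = (qSeq (n+1) : ℝ) * Rr (n+1) (k+1) := Rr_succ' n (k+1)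
    have h2 : n + (k+1) + 1 = (n+1) + k + 1 := by omega
    rw [h1, h2]
    field_simp
  have hr : Rr n 1 = (qSeq (n+1) : ℝ) := by simp [Rr]
  have h0 : (Edig (n + 0 + 1) : ℝ) / Rr n (0 + 1) = (Edig (n+1) : ℝ) / (qSeq (n+1) : ℝ) := by
    norm_num [hr]
  calc tl n = ∑' k, (Edig (n + k + 1) : ℝ) / Rr n (k + 1) := rfl
    _ = (Edig (n + 0 + 1) : ℝ) / Rr n (0 + 1) + ∑' k, (Edig (n + (k+1) + 1) : ℝ) / Rr n (k + 1 + 1) := by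
        exact Summable.tsum_eq_zero_add (summable_tl n)
    _ = (Edig (n+1) : ℝ) / (qSeq (n+1) : ℝ) + (∑' k, (Edig ((n+1) + k + 1) : ℝ) / Rr (n+1) (k + 1)) / (qSeq (n+1) : ℝ) := by
        rw [h0]
        congr 1
        rw [← tsum_div_const]
        exact tsum_congr hshift
    _ = ((Edig (n + 1) : ℝ) + tl (n + 1)) / (qSeq (n + 1) : ℝ) := by
        rw [tl]
        ring

lemma tl_step (m : ℕ) (h : tl (m+1) < 1) : tl m < 1 := by
  have hq : (2:ℝ) ≤ (qSeq (m+1) : ℝ) := qSeq_cast_ge _ (by omega)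
  have hE : (Edig (m+1) : ℝ) ≤ (qSeq (m+1) : ℝ) - 1 := by
    have h1 := (Edig_bounds (j := m + 1) (by omega)).2
    have h2 : Edig (m+1) + 1 ≤ qSeq (m+1) := by simp only [qSeq]; omega
    have h3 : ((Edig (m+1) : ℝ)) + 1 ≤ (qSeq (m+1) : ℝ) := by exact_mod_cast h2
    linarith
  rw [tl_rec m, div_lt_one (by linarith)]
  linarith

lemma tl_back (d : ℕ) : ∀ n, tl (n + d) < 1 → tl n < 1 := by
  induction d with
  | zero => intro n h; simpa using h
  | succ d ih =>
    intro n h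
    apply tl_step
    apply ih (n+1)
    have he : n + 1 + d = n + (d + 1) := by omega
    rw [he]
    exact h

lemma tl_lt_one (n : ℕ) : tl n < 1 := by
  have base : tl (Tn (n+1)) < 1 := by
    set K := n + 1 with hK
    have hd := digit_eq (K := K) (k := 0) (by omega)
    have hE' : Edig (Tn K + 1) = 1 := by simpa using hd.1
    have hq' : qSeq (Tn K + 1) = K + 2 := by simpa using hd.2
    rw [tl_rec (Tn K), hE', hq']
    rw [div_lt_one (by positivity)]
    have h1 := tl_le_one (Tn K + 1)
    have hK1 : (1:ℝ) ≤ (K:ℝ) := by exact_mod_cast Nat.one_le_iff_ne_zero.mpr (by omega)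
    push_cast
    linarith
  have hge : n ≤ Tn (n+1) := le_trans (by omega) (self_le_Tn (n+1))
  apply tl_back (Tn (n+1) - n) n
  have he : n + (Tn (n+1) - n) = Tn (n+1) := by omega
  rw [he]
  exact base

lemma tl_sandwich (n : ℕ) :
    (Edig (n+1) : ℝ) / (qSeq (n+1) : ℝ) ≤ tl n ∧ tl n < ((Edig (n+1) : ℝ) + 1) / (qSeq (n+1) : ℝ) := by
  have hq : (0:ℝ) < (qSeq (n+1) : ℝ) := lt_of_lt_of_le (by norm_num) (qSeq_cast_ge _ (by omega))
  have h0 := tl_nonneg (n+1)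
  have h1 := tl_lt_one (n+1)
  rw [tl_rec n]
  constructor
  · exact (div_le_div_iff_of_pos_right hq).mpr (by linarith)
  · exact (div_lt_div_iff_of_pos_right hq).mpr (by linarith)

lemma cv_eq : cantorVal qSeq Edig = tl 0 := by
  unfold cantorVal tl
  apply tsum_congr
  intro k
  norm_num [Rr]

lemma Rr_split (n k : ℕ) : Rr 0 (n + k) = Rr 0 n * Rr n k := by
  simp only [Rr]
  rw [Finset.prod_range_add]
  congr 1
  apply Finset.prod_congr rfl
  intro t _
  have h : n + t + 0 + 1 = t + n + 1 := by omega
  rw [h]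

lemma Rr_nat (n k : ℕ) : Rr n k = ((∏ t ∈ Finset.range k, qSeq (t + n + 1) : ℕ) : ℝ) := by
  rw [Nat.cast_prod]
  rfl

lemma TQ_eq (n : ℕ) : TQ qSeq (cantorVal qSeq Edig) n = tl n := by
  have hP : (∏ m ∈ Finset.range n, (qSeq (m + 1) : ℝ)) = Rr 0 n := by
    unfold Rr
    apply Finset.prod_congr rfl
    intro t _
    norm_num
  have hPpos : 0 < Rr 0 n := Rr_pos 0 n
  set f : ℕ → ℝ := fun k => (Edig (k + 1) : ℝ) / Rr 0 (k + 1) with hf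
  have hsum : Summable f := by
    have := summable_tl 0
    simpa using this
  have hsplit : (∑ k ∈ Finset.range n, f k) + (∑' k, f (k + n)) = ∑' k, f k :=
    Summable.sum_add_tsum_nat_add n hsum
  have hx : cantorVal qSeq Edig = ∑' k, f k := by
    rw [cv_eq]
    apply tsum_congr
    intro k
    simp only [hf]
    congr 1
    norm_num
  -- second piece
  have htail : Rr 0 n * (∑' k, f (k + n)) = tl n := by
    rw [← tsum_mul_left]
    unfold tl
    apply tsum_congr
    intro k
    simp only [hf]
    have h1 : k + n + 1 = n + (k + 1) := by omega
    have h2 : Rr 0 (k + n + 1) = Rr 0 n * Rr n (k + 1) := by rw [h1]; exact Rr_split n (k+1)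
    have h3 : n + k + 1 = k + n + 1 := by omega
    rw [h2, h3]
    have := Rr_pos n (k+1)
    field_simp
  -- first piece is a natural number
  set Z : ℕ := ∑ k ∈ Finset.range n, Edig (k + 1) * ∏ t ∈ Finset.range (n - (k+1)), qSeq (t + (k+1) + 1) with hZ
  have hfirst : Rr 0 n * (∑ k ∈ Finset.range n, f k) = (Z : ℝ) := by
    rw [Finset.mul_sum, hZ]
    rw [Nat.cast_sum]
    apply Finset.sum_congr rfl
    intro k hk
    have hkn : k < n := Finset.mem_range.mp hk
    have hsp : Rr 0 n = Rr 0 (k+1) * Rr (k+1) (n - (k+1)) := by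
      have h : (k+1) + (n - (k+1)) = n := by omega
      calc Rr 0 n = Rr 0 ((k+1) + (n - (k+1))) := by rw [h]
        _ = Rr 0 (k+1) * Rr (k+1) (n - (k+1)) := Rr_split (k+1) (n-(k+1))
    simp only [hf]
    rw [hsp]
    have hp1 := Rr_pos 0 (k+1)
    rw [Nat.cast_mul, ← Rr_nat]
    field_simp
  -- assemble
  unfold TQ
  rw [hP, hx, ← hsplit, mul_add, hfirst, htail]
  have hZZ : (Z : ℝ) = ((Z : ℤ) : ℝ) := by push_cast; ring
  rw [hZZ, Int.fract_intCast_add]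
  exact Int.fract_eq_self.mpr ⟨tl_nonneg n, tl_lt_one n⟩

lemma not_order1 : ¬ QNormalOfOrder qSeq Edig 1 := by
  intro h
  have h0 := h [0] rfl
  have hzero : ∀ n, (NQG Edig [0] n : ℝ) / QNkG qSeq 1 n = 0 := by
    intro n
    have hN : NQG Edig [0] n = 0 := by
      unfold NQG
      rw [Finset.card_eq_zero, Finset.filter_eq_empty_iff]
      intro j hj
      have h1 := (Edig_bounds (Finset.mem_Icc.mp hj).1).1
      simp only [List.length_cons, List.length_nil, List.range_succ, List.range_zero]
      simp only [List.map_append, List.map_cons, List.map_nil, List.nil_append]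
      simp only [List.cons.injEq, and_true]
      simp only [Nat.add_zero]
      omega
    rw [hN]
    simp
  have h1 : Filter.Tendsto (fun n => (NQG Edig [0] n : ℝ) / QNkG qSeq 1 n) Filter.atTop (nhds 0) := by
    rw [Filter.tendsto_congr hzero]
    exact tendsto_const_nhds
  have := tendsto_nhds_unique h0 h1
  norm_num at this

lemma not_normal : ¬ QNormal qSeq Edig := fun h => not_order1 (h 1 le_rfl)

-- counting lemmas
lemma count_upper {m : ℕ} {u v : ℝ} (huv : u ≤ v) :
    (((Finset.range m).filter (fun k : ℕ => u < (k:ℝ) ∧ (k:ℝ) < v)).card : ℝ) ≤ v - u + 1 := by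
  set s := (Finset.range m).filter (fun k : ℕ => u < (k:ℝ) ∧ (k:ℝ) < v) with hs
  rcases s.eq_empty_or_nonempty with h | h
  · rw [h]; simp; linarith
  · have hmin := s.min'_mem h
    have hmax := s.max'_mem h
    have h1 : u < (s.min' h : ℝ) := (Finset.mem_filter.mp hmin).2.1
    have h2 : ((s.max' h : ℕ) : ℝ) < v := (Finset.mem_filter.mp hmax).2.2
    have hsub : s ⊆ Finset.Icc (s.min' h) (s.max' h) :=
      fun x hx => Finset.mem_Icc.mpr ⟨s.min'_le x hx, s.le_max' x hx⟩
    have hcard : s.card ≤ s.max' h + 1 - s.min' h := by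
      have := Finset.card_le_card hsub
      rwa [Nat.card_Icc] at this
    have hmm : s.min' h ≤ s.max' h := s.min'_le _ hmax
    have hcast : ((s.max' h + 1 - s.min' h : ℕ) : ℝ) = (s.max' h : ℝ) + 1 - (s.min' h : ℝ) := by
      have : s.min' h ≤ s.max' h + 1 := by omega
      push_cast [Nat.cast_sub this]
      ring
    calc (s.card : ℝ) ≤ ((s.max' h + 1 - s.min' h : ℕ) : ℝ) := by exact_mod_cast hcard
      _ = (s.max' h : ℝ) + 1 - (s.min' h : ℝ) := hcast
      _ ≤ v - u + 1 := by linarith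

lemma count_lower {m : ℕ} {u v : ℝ} (hu : -1 ≤ u) (hv : v < m) :
    v - u - 1 ≤ (((Finset.range m).filter (fun k : ℕ => u ≤ (k:ℝ) ∧ (k:ℝ) ≤ v)).card : ℝ) := by
  rcases le_or_gt (v - u - 1) 0 with h | h
  · exact le_trans h (Nat.cast_nonneg _)
  · have hv0 : (0:ℝ) ≤ v := by linarith
    set i1 := ⌈u⌉₊ with hi1d
    set i2 := ⌊v⌋₊ with hi2d
    have hu1 : u ≤ (i1:ℝ) := Nat.le_ceil u
    have hi1 : (i1:ℝ) ≤ u + 1 := by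
      rcases le_or_gt 0 u with h0 | h0
      · exact le_of_lt (Nat.ceil_lt_add_one h0)
      · have hz : i1 = 0 := by
          rw [hi1d, Nat.ceil_eq_zero]
          linarith
        rw [hz]
        push_cast
        linarith
    have hi2 : v - 1 < (i2:ℝ) := by
      have := Nat.lt_floor_add_one v
      linarith
    have hi2' : (i2:ℝ) ≤ v := Nat.floor_le hv0
    have hsub : Finset.Icc i1 i2 ⊆ (Finset.range m).filter (fun k : ℕ => u ≤ (k:ℝ) ∧ (k:ℝ) ≤ v) := by
      intro k hk
      obtain ⟨hk1, hk2⟩ := Finset.mem_Icc.mp hk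
      have hkr1 : (i1:ℝ) ≤ (k:ℝ) := by exact_mod_cast hk1
      have hkr2 : (k:ℝ) ≤ (i2:ℝ) := by exact_mod_cast hk2
      refine Finset.mem_filter.mpr ⟨Finset.mem_range.mpr ?_, by linarith, by linarith⟩
      have : (k:ℝ) < (m:ℝ) := by linarith
      exact_mod_cast this
    have hcard := Finset.card_le_card hsub
    have hic : (Finset.Icc i1 i2).card = i2 + 1 - i1 := Nat.card_Icc i1 i2
    have hle : i1 ≤ i2 + 1 := by
      have : (i1:ℝ) < (i2:ℝ) + 1 := by linarith
      exact_mod_cast le_of_lt this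
    have hcast : ((i2 + 1 - i1 : ℕ) : ℝ) = (i2:ℝ) + 1 - (i1:ℝ) := by
      push_cast [Nat.cast_sub hle]
      ring
    calc v - u - 1 ≤ (i2:ℝ) + 1 - (i1:ℝ) := by linarith
      _ = ((i2 + 1 - i1 : ℕ) : ℝ) := hcast.symm
      _ ≤ _ := by rw [← hic]; exact_mod_cast hcard

lemma tl_group_sandwich (K k : ℕ) (hk : k < K + 1) :
    ((k:ℝ)+1) / ((K:ℝ)+2) ≤ tl (Tn K + k) ∧ tl (Tn K + k) < ((k:ℝ)+2) / ((K:ℝ)+2) := by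
  obtain ⟨hE, hq⟩ := digit_eq (K := K) (k := k) hk
  have hs := tl_sandwich (Tn K + k)
  rw [hE, hq] at hs
  push_cast at hs
  constructor
  · have := hs.1
    convert this using 2 <;> push_cast <;> ring
  · have := hs.2
    convert this using 2 <;> push_cast <;> ring

lemma group_bound {a b : ℝ} (ha : 0 ≤ a) (hab : a < b) (hb : b ≤ 1) (K : ℕ) :
    |(((Finset.range (K+1)).filter (fun k => a ≤ tl (Tn K + k) ∧ tl (Tn K + k) < b)).card : ℝ)
      - (b - a) * ((K:ℝ)+1)| ≤ 3 := by
  have hK2 : (0:ℝ) < (K:ℝ) + 2 := by positivity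
  have hup : (((Finset.range (K+1)).filter (fun k => a ≤ tl (Tn K + k) ∧ tl (Tn K + k) < b)).card : ℝ)
      ≤ (b - a) * ((K:ℝ)+1) + 3 := by
    have hsub : (Finset.range (K+1)).filter (fun k => a ≤ tl (Tn K + k) ∧ tl (Tn K + k) < b)
        ⊆ (Finset.range (K+1)).filter (fun k : ℕ => a * ((K:ℝ)+2) - 2 < (k:ℝ) ∧ (k:ℝ) < b * ((K:ℝ)+2) - 1) := by
      intro k hk
      obtain ⟨hkr, hc1, hc2⟩ := Finset.mem_filter.mp hk
      have hkK := Finset.mem_range.mp hkr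
      obtain ⟨hs1, hs2⟩ := tl_group_sandwich K k hkK
      refine Finset.mem_filter.mpr ⟨hkr, ?_, ?_⟩
      · have : a * ((K:ℝ)+2) < (k:ℝ) + 2 := by
          have := lt_of_le_of_lt hc1 hs2
          rw [lt_div_iff₀ hK2] at this
          linarith [mul_comm a ((K:ℝ)+2)]
        linarith
      · have : (k:ℝ) + 1 < b * ((K:ℝ)+2) := by
          have := lt_of_le_of_lt hs1 hc2
          rw [div_lt_iff₀ hK2] at this
          linarith [mul_comm b ((K:ℝ)+2)]
        linarith
    have h1 := Finset.card_le_card hsub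
    have h2 := count_upper (m := K+1) (u := a * ((K:ℝ)+2) - 2) (v := b * ((K:ℝ)+2) - 1)
      (by nlinarith)
    have : (((Finset.range (K+1)).filter (fun k => a ≤ tl (Tn K + k) ∧ tl (Tn K + k) < b)).card : ℝ)
        ≤ (b * ((K:ℝ)+2) - 1) - (a * ((K:ℝ)+2) - 2) + 1 := le_trans (by exact_mod_cast h1) h2
    nlinarith
  have hlo : (b - a) * ((K:ℝ)+1) - 3
      ≤ (((Finset.range (K+1)).filter (fun k => a ≤ tl (Tn K + k) ∧ tl (Tn K + k) < b)).card : ℝ) := by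
    have hsub : (Finset.range (K+1)).filter (fun k : ℕ => a * ((K:ℝ)+2) - 1 ≤ (k:ℝ) ∧ (k:ℝ) ≤ b * ((K:ℝ)+2) - 2)
        ⊆ (Finset.range (K+1)).filter (fun k => a ≤ tl (Tn K + k) ∧ tl (Tn K + k) < b) := by
      intro k hk
      obtain ⟨hkr, hc1, hc2⟩ := Finset.mem_filter.mp hk
      have hkK := Finset.mem_range.mp hkr
      obtain ⟨hs1, hs2⟩ := tl_group_sandwich K k hkK
      refine Finset.mem_filter.mpr ⟨hkr, ?_, ?_⟩
      · have : a ≤ ((k:ℝ)+1) / ((K:ℝ)+2) := by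
          rw [le_div_iff₀ hK2]
          linarith [mul_comm a ((K:ℝ)+2)]
        linarith
      · have : ((k:ℝ)+2) / ((K:ℝ)+2) ≤ b := by
          rw [div_le_iff₀ hK2]
          linarith [mul_comm b ((K:ℝ)+2)]
        linarith
    have h1 := Finset.card_le_card hsub
    have h2 := count_lower (m := K+1) (u := a * ((K:ℝ)+2) - 1) (v := b * ((K:ℝ)+2) - 2)
      (by nlinarith) (by push_cast; nlinarith)
    have h3 : (b * ((K:ℝ)+2) - 2) - (a * ((K:ℝ)+2) - 1) - 1
        ≤ (((Finset.range (K+1)).filter (fun k => a ≤ tl (Tn K + k) ∧ tl (Tn K + k) < b)).card : ℝ) :=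
      le_trans h2 (by exact_mod_cast h1)
    nlinarith
  rw [abs_le]
  constructor <;> linarith

section assembly
variable {a b : ℝ}

lemma card_range_add (p : ℕ → Prop) [DecidablePred p] (A B : ℕ) :
    ((Finset.range (A+B)).filter p).card
      = ((Finset.range A).filter p).card + ((Finset.Ico A (A+B)).filter p).card := by
  rw [Finset.range_eq_Ico, ← Finset.Ico_union_Ico_eq_Ico (Nat.zero_le A) (Nat.le_add_right A B),
    Finset.filter_union]
  rw [Finset.card_union_of_disjoint (Finset.disjoint_filter_filter (Finset.Ico_disjoint_Ico_consecutive 0 A (A+B))), ← Finset.range_eq_Ico]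

lemma card_Ico_shift (p : ℕ → Prop) [DecidablePred p] (A B : ℕ) :
    ((Finset.Ico A (A+B)).filter p).card = ((Finset.range B).filter (fun k => p (A+k))).card := by
  apply Finset.card_bij' (fun n _ => n - A) (fun k _ => A + k)
  · intro n hn
    obtain ⟨hn1, hc⟩ := Finset.mem_filter.mp hn
    obtain ⟨h1, h2⟩ := Finset.mem_Ico.mp hn1
    refine Finset.mem_filter.mpr ⟨Finset.mem_range.mpr (by omega), ?_⟩
    have : A + (n - A) = n := by omega
    rw [this]
    exact hc
  · intro k hk
    obtain ⟨hk1, hc⟩ := Finset.mem_filter.mp hk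
    have := Finset.mem_range.mp hk1
    exact Finset.mem_filter.mpr ⟨Finset.mem_Ico.mpr (by omega), hc⟩
  · intro n hn
    have := Finset.mem_Ico.mp (Finset.mem_filter.mp hn).1
    omega
  · intro k _
    omega

lemma full_bound (ha : 0 ≤ a) (hab : a < b) (hb : b ≤ 1) (K : ℕ) :
    |(((Finset.range (Tn K)).filter (fun n => a ≤ tl n ∧ tl n < b)).card : ℝ)
      - (b - a) * (Tn K : ℝ)| ≤ 3 * K := by
  induction K with
  | zero => simp [Tn]
  | succ K ih =>
    have hTs : Tn (K+1) = Tn K + (K+1) := Tn_succ K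
    rw [hTs, card_range_add _ (Tn K) (K+1), card_Ico_shift _ (Tn K) (K+1)]
    have hshift : ((Finset.range (K+1)).filter (fun k => a ≤ tl (Tn K + k) ∧ tl (Tn K + k) < b)).card
        = ((Finset.range (K+1)).filter (fun k => (fun n => a ≤ tl n ∧ tl n < b) (Tn K + k))).card := rfl
    have hg := group_bound ha hab hb K
    rw [← hshift]
    have hcast : ((Tn K + (K+1) : ℕ) : ℝ) = (Tn K : ℝ) + ((K:ℝ)+1) := by push_cast; ring
    rw [hcast]
    push_cast
    calc |(((Finset.range (Tn K)).filter (fun n => a ≤ tl n ∧ tl n < b)).card : ℝ)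
          + (((Finset.range (K+1)).filter (fun k => a ≤ tl (Tn K + k) ∧ tl (Tn K + k) < b)).card : ℝ)
          - (b - a) * ((Tn K : ℝ) + ((K:ℝ)+1))|
        ≤ |(((Finset.range (Tn K)).filter (fun n => a ≤ tl n ∧ tl n < b)).card : ℝ) - (b - a) * (Tn K : ℝ)|
          + |(((Finset.range (K+1)).filter (fun k => a ≤ tl (Tn K + k) ∧ tl (Tn K + k) < b)).card : ℝ)
            - (b - a) * ((K:ℝ)+1)| := by
          have : (((Finset.range (Tn K)).filter (fun n => a ≤ tl n ∧ tl n < b)).card : ℝ)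
              + (((Finset.range (K+1)).filter (fun k => a ≤ tl (Tn K + k) ∧ tl (Tn K + k) < b)).card : ℝ)
              - (b - a) * ((Tn K : ℝ) + ((K:ℝ)+1))
              = ((((Finset.range (Tn K)).filter (fun n => a ≤ tl n ∧ tl n < b)).card : ℝ) - (b - a) * (Tn K : ℝ))
              + ((((Finset.range (K+1)).filter (fun k => a ≤ tl (Tn K + k) ∧ tl (Tn K + k) < b)).card : ℝ)
                - (b - a) * ((K:ℝ)+1)) := by ring
          rw [this]
          exact abs_add_le _ _
      _ ≤ 3 * K + 3 := add_le_add ih hg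
      _ = 3 * ((K:ℝ)+1) := by ring

lemma partial_bound (ha : 0 ≤ a) (hab : a < b) (hb : b ≤ 1) (N : ℕ) (hN : 1 ≤ N) :
    |(((Finset.range N).filter (fun n => a ≤ tl n ∧ tl n < b)).card : ℝ)
      - (b - a) * (N : ℝ)| ≤ 4 * (mOf N : ℝ) := by
  obtain ⟨h1, h2⟩ := mOf_spec hN
  have hM1 := mOf_pos hN
  obtain ⟨K, hK⟩ : ∃ K, mOf N = K + 1 := ⟨mOf N - 1, by omega⟩
  rw [hK] at h1 h2 ⊢
  simp only [Nat.add_sub_cancel] at h1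
  rw [Tn_succ] at h2
  -- N = Tn K + d, 1 ≤ d ≤ K+1
  obtain ⟨d, hd1, hd2, hdN⟩ : ∃ d, 1 ≤ d ∧ d ≤ K + 1 ∧ N = Tn K + d := ⟨N - Tn K, by omega, by omega, by omega⟩
  subst hdN
  rw [card_range_add _ (Tn K) d, card_Ico_shift _ (Tn K) d]
  have hfull := full_bound ha hab hb K
  set c2 := ((Finset.range d).filter (fun k => (fun n => a ≤ tl n ∧ tl n < b) (Tn K + k))).card with hc2
  have hc2le : c2 ≤ d := le_trans (Finset.card_filter_le _ _) (by simp)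
  have hcast : ((Tn K + d : ℕ) : ℝ) = (Tn K : ℝ) + (d:ℝ) := by push_cast; ring
  rw [hcast]
  push_cast
  have key : |(c2 : ℝ) - (b - a) * (d:ℝ)| ≤ (d:ℝ) := by
    rw [abs_le]
    have hc2r : (c2:ℝ) ≤ (d:ℝ) := by exact_mod_cast hc2le
    have hba : 0 ≤ (b-a) * (d:ℝ) := mul_nonneg (by linarith) (Nat.cast_nonneg d)
    constructor <;> nlinarith [Nat.cast_nonneg (α := ℝ) c2, Nat.cast_nonneg (α := ℝ) d]
  have hdK : (d:ℝ) ≤ (K:ℝ) + 1 := by exact_mod_cast hd2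
  calc |(((Finset.range (Tn K)).filter (fun n => a ≤ tl n ∧ tl n < b)).card : ℝ) + (c2:ℝ)
        - (b - a) * ((Tn K : ℝ) + (d:ℝ))|
      ≤ |(((Finset.range (Tn K)).filter (fun n => a ≤ tl n ∧ tl n < b)).card : ℝ) - (b - a) * (Tn K : ℝ)|
        + |(c2 : ℝ) - (b - a) * (d:ℝ)| := by
        have heq : (((Finset.range (Tn K)).filter (fun n => a ≤ tl n ∧ tl n < b)).card : ℝ) + (c2:ℝ)
            - (b - a) * ((Tn K : ℝ) + (d:ℝ))
            = ((((Finset.range (Tn K)).filter (fun n => a ≤ tl n ∧ tl n < b)).card : ℝ) - (b - a) * (Tn K : ℝ))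
            + ((c2 : ℝ) - (b - a) * (d:ℝ)) := by ring
        rw [heq]
        exact abs_add_le _ _
    _ ≤ 3 * K + (d:ℝ) := add_le_add hfull key
    _ ≤ 4 * ((K:ℝ) + 1) := by linarith [Nat.cast_nonneg (α := ℝ) K]
end assembly

lemma two_Tn (K : ℕ) : 2 * Tn K = K * (K + 1) :=
  Nat.mul_div_cancel' (Even.two_dvd (Nat.even_mul_succ_self K)) 

lemma mOf_sq {N : ℕ} (hN : 1 ≤ N) : (mOf N - 1) * (mOf N - 1) < 2 * N := by
  obtain ⟨h1, h2⟩ := mOf_spec hN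
  have hM := mOf_pos hN
  have ht := two_Tn (mOf N - 1)
  have he : mOf N - 1 + 1 = mOf N := by omega
  rw [he] at ht
  have hmul : (mOf N - 1) * (mOf N - 1) ≤ (mOf N - 1) * mOf N :=
    Nat.mul_le_mul_left _ (by omega)
  omega

lemma mOf_real {N : ℕ} (hN : 1 ≤ N) : (mOf N : ℝ) ≤ Real.sqrt (2 * N) + 1 := by
  have h := mOf_sq hN
  have hM := mOf_pos hN
  have h1 : ((mOf N - 1 : ℕ) : ℝ)^2 ≤ 2 * (N:ℝ) := by
    have : ((mOf N - 1) * (mOf N - 1) : ℕ) ≤ 2 * N := le_of_lt h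
    have := (Nat.cast_le (α := ℝ)).mpr this
    push_cast at this
    nlinarith [this]
  have h2 : ((mOf N - 1 : ℕ) : ℝ) ≤ Real.sqrt (2 * N) := by
    have := Real.sqrt_le_sqrt h1
    rwa [Real.sqrt_sq (Nat.cast_nonneg _)] at this
  have h3 : ((mOf N - 1 : ℕ) : ℝ) = (mOf N : ℝ) - 1 := by
    rw [Nat.cast_sub hM]
    norm_num
  linarith [h2, h3.symm.le]

lemma tendsto_sqrt_div : Filter.Tendsto (fun N : ℕ => Real.sqrt (2 * N) / N) Filter.atTop (nhds 0) := by
  have hsq : Filter.Tendsto (fun N : ℕ => Real.sqrt N) Filter.atTop Filter.atTop := by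
    apply Filter.tendsto_atTop.mpr
    intro c
    filter_upwards [Filter.eventually_ge_atTop (⌈c⌉₊^2)] with N hN
    have h1 : ((⌈c⌉₊^2 : ℕ) : ℝ) ≤ (N:ℝ) := by exact_mod_cast hN
    have h2 := Real.sqrt_le_sqrt h1
    rw [show ((⌈c⌉₊^2 : ℕ) : ℝ) = ((⌈c⌉₊ : ℝ))^2 by push_cast; ring, Real.sqrt_sq (Nat.cast_nonneg _)] at h2
    exact le_trans (Nat.le_ceil c) h2
  have hinv : Filter.Tendsto (fun N : ℕ => (Real.sqrt N)⁻¹) Filter.atTop (nhds 0) :=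
    hsq.inv_tendsto_atTop
  have hmul : Filter.Tendsto (fun N : ℕ => Real.sqrt 2 * (Real.sqrt N)⁻¹) Filter.atTop (nhds (Real.sqrt 2 * 0)) :=
    hinv.const_mul _
  rw [mul_zero] at hmul
  apply hmul.congr'
  filter_upwards [Filter.eventually_ge_atTop 1] with N hN
  have hNpos : (0:ℝ) < N := by exact_mod_cast hN
  have hsp : (0:ℝ) < Real.sqrt N := Real.sqrt_pos.mpr hNpos
  rw [Real.sqrt_mul (by norm_num : (0:ℝ) ≤ 2) (N:ℝ)]
  rw [eq_div_iff (ne_of_gt hNpos)]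
  rw [← Real.mul_self_sqrt (le_of_lt hNpos)]
  field_simp
  rw [Real.sqrt_sq hsp.le]

lemma tendsto_bound : Filter.Tendsto (fun N : ℕ => (Real.sqrt (2*N) + 1) / N) Filter.atTop (nhds 0) := by
  have h1 := tendsto_sqrt_div
  have h2 := tendsto_one_div_atTop_nhds_zero_nat (𝕜 := ℝ)
  have := h1.add h2
  rw [add_zero] at this
  apply this.congr
  intro N
  rw [add_div]

lemma tendsto_mOf : Filter.Tendsto (fun N : ℕ => (mOf N : ℝ) / N) Filter.atTop (nhds 0) := by
  apply squeeze_zero_norm' ?_ tendsto_bound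
  filter_upwards [Filter.eventually_ge_atTop 1] with N hN
  have hNpos : (0:ℝ) < N := by exact_mod_cast hN
  rw [Real.norm_eq_abs, abs_of_nonneg (by positivity)]
  exact (div_le_div_iff_of_pos_right hNpos).mpr (mOf_real hN)

lemma ud_main : UDMod1 (TQ qSeq (cantorVal qSeq Edig)) := by
  intro a b ha hab hb
  have hcongr : ∀ N : ℕ, ((Finset.range N).filter fun n =>
      a ≤ Int.fract (TQ qSeq (cantorVal qSeq Edig) n) ∧ Int.fract (TQ qSeq (cantorVal qSeq Edig) n) < b)
      = ((Finset.range N).filter fun n => a ≤ tl n ∧ tl n < b) := by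
    intro N
    apply Finset.filter_congr
    intro n _
    rw [TQ_eq n, Int.fract_eq_self.mpr ⟨tl_nonneg n, tl_lt_one n⟩]
  have hzero : Filter.Tendsto
      (fun N : ℕ => ((((Finset.range N).filter fun n => a ≤ tl n ∧ tl n < b).card : ℝ))/N - (b-a))
      Filter.atTop (nhds 0) := by
    have hg : Filter.Tendsto (fun N : ℕ => 4 * ((mOf N : ℝ)/N)) Filter.atTop (nhds 0) := by
      have := tendsto_mOf.const_mul (4:ℝ)
      rwa [mul_zero] at this
    apply squeeze_zero_norm' ?_ hg
    filter_upwards [Filter.eventually_ge_atTop 1] with N hN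
    have hNpos : (0:ℝ) < N := by exact_mod_cast hN
    have hpb := partial_bound (a := a) (b := b) ha hab hb N hN
    rw [Real.norm_eq_abs]
    have heq : ((((Finset.range N).filter fun n => a ≤ tl n ∧ tl n < b).card : ℝ))/N - (b-a)
        = ((((Finset.range N).filter fun n => a ≤ tl n ∧ tl n < b).card : ℝ) - (b-a)*N)/N := by
      field_simp
    rw [heq, abs_div, abs_of_pos hNpos]
    rw [div_le_iff₀ hNpos]
    calc |(((Finset.range N).filter fun n => a ≤ tl n ∧ tl n < b).card : ℝ) - (b-a)*N|
        ≤ 4 * (mOf N : ℝ) := hpb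
      _ = 4 * ((mOf N : ℝ)/N) * N := by field_simp
  have hfinal := hzero.add_const (b-a)
  rw [zero_add] at hfinal
  have : (fun N : ℕ => ((((Finset.range N).filter fun n => a ≤ tl n ∧ tl n < b).card : ℝ))/N - (b-a) + (b-a))
      = fun N : ℕ => ((((Finset.range N).filter fun n => a ≤ tl n ∧ tl n < b).card : ℝ))/N := by
    funext N
    ring
  rw [this] at hfinal
  apply hfinal.congr
  intro N
  rw [hcongr N]


/-- For the above `E` and `Q`, the number `x = Σ_{n=1}^∞ E_n/(q_1 ⋯ q_n)` is
`Q`-distribution normal, but not `Q`-normal; indeed not `Q`-normal of order `1`. -/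
theorem stmt10 :
    UDMod1 (TQ qSeq (cantorVal qSeq Edig)) ∧
    ¬ QNormal qSeq Edig ∧
    ¬ QNormalOfOrder qSeq Edig 1 :=
  ⟨ud_main, not_normal, not_order1⟩
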